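/- Let d ≥ 3 be an integer. There is a constant c > 0, depending only on d, such that for every integer r ≥ 1 and every integer n ≥ r + 1: Σ_{0 < i_1 < ⋯ < i_r < n} i_1^{−d/2} (i_2 − i_1)^{−d/2} ⋯ (i_r − i_{r−1})^{−d/2} (n − i_r)^{−d/2} ≤ c^r · n^{−d/2}. (Lemma C.1.) -/

import Mathlib

open scoped BigOperators

noncomputable section

/-- The summand `i_1^{−d/2} (i_2−i_1)^{−d/2} ⋯ (i_{r+1}−i_r)^{−d/2}` attached to a tuple
`i : Fin (r+1) → ℕ` (with the convention `i_0 := 0`). -/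
def gapProd (d : ℕ) (r : ℕ) (i : Fin (r + 1) → ℕ) : ℝ :=
  ∏ j : Fin (r + 1),
    (((i j - if (j : ℕ) = 0 then 0
        else i ⟨(j : ℕ) - 1, lt_of_le_of_lt (Nat.sub_le _ _) j.isLt⟩ : ℕ) : ℝ)) ^
      (-(d : ℝ) / 2)

namespace Stmt14Aux

open Finset

open scoped Classical

/-- The index Finset: strictly monotone tuples with values in `(0, n)`. -/
def F (r n : ℕ) : Finset (Fin (r + 1) → ℕ) :=
  (Fintype.piFinset fun _ => Finset.Ioo 0 n).filter StrictMono

lemma mem_F {r n : ℕ} {i : Fin (r + 1) → ℕ} :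
    i ∈ F r n ↔ StrictMono i ∧ ∀ j, 0 < i j ∧ i j < n := by
  simp only [F, Finset.mem_filter, Fintype.mem_piFinset, Finset.mem_Ioo]
  tauto

/-- The summand attached to a tuple. -/
def term (d r n : ℕ) (i : Fin (r + 1) → ℕ) : ℝ :=
  gapProd d r i * ((n - i (Fin.last r) : ℕ) : ℝ) ^ (-(d : ℝ) / 2)

/-- The full (finite) sum. -/
def S (d r n : ℕ) : ℝ := ∑ i ∈ F r n, term d r n i

lemma tsum_eq_S (d r n : ℕ) :
    (∑' i : {i : Fin (r + 1) → ℕ // StrictMono i ∧ ∀ j, 0 < i j ∧ i j < n},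
        gapProd d r i.1 * ((n - i.1 (Fin.last r) : ℕ) : ℝ) ^ (-(d : ℝ) / 2)) = S d r n := by
  rw [S, ← Finset.tsum_subtype]
  exact ((Equiv.subtypeEquivRight (fun i => mem_F.symm)).tsum_eq
    (fun x : {i // i ∈ F r n} => term d r n x.1))

lemma strictMono_lower {r : ℕ} {i : Fin (r + 1) → ℕ} (h : StrictMono i) (k : Fin (r + 1)) :
    (k : ℕ) + i 0 ≤ i k := by
  induction k using Fin.induction with
  | zero => simp
  | succ j ih =>
      have h1 : i j.castSucc < i j.succ := h (Fin.castSucc_lt_succ (i := j))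
      have := ih
      simp only [Fin.coe_castSucc] at this
      simp only [Fin.val_succ]
      omega

lemma F_eq_empty {r n : ℕ} (h : n ≤ r + 1) : F r n = ∅ := by
  ext i
  simp only [Finset.notMem_empty, iff_false, mem_F, not_and]
  intro hmono hall
  have h1 := strictMono_lower hmono (Fin.last r)
  have h2 := (hall 0).1
  have h3 := (hall (Fin.last r)).2
  simp only [Fin.val_last] at h1
  omega

lemma gapProd_succ (d r : ℕ) (i : Fin (r + 2) → ℕ) :
    gapProd d (r + 1) i =
      gapProd d r (Fin.init i) *
        ((i (Fin.last (r + 1)) - Fin.init i (Fin.last r) : ℕ) : ℝ) ^ (-(d : ℝ) / 2) := by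
  rw [gapProd, Fin.prod_univ_castSucc]
  congr 1

lemma S_succ (d r n : ℕ) :
    S d (r + 1) n = ∑ m ∈ Finset.Ioo 0 n, S d r m * ((n - m : ℕ) : ℝ) ^ (-(d : ℝ) / 2) := by
  have hrw : ∀ m ∈ Finset.Ioo 0 n,
      S d r m * ((n - m : ℕ) : ℝ) ^ (-(d : ℝ) / 2) =
        ∑ i' ∈ F r m, term d r m i' * ((n - m : ℕ) : ℝ) ^ (-(d : ℝ) / 2) := by
    intro m _
    rw [S, Finset.sum_mul]
  rw [Finset.sum_congr rfl hrw,
    Finset.sum_sigma' (Finset.Ioo 0 n) (fun m => F r m)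
      (fun m i' => term d r m i' * ((n - m : ℕ) : ℝ) ^ (-(d : ℝ) / 2))]
  rw [S]
  refine Finset.sum_nbij' (i := fun i => ⟨i (Fin.last (r + 1)), Fin.init i⟩)
    (j := fun x => Fin.snoc x.2 x.1) ?_ ?_ ?_ ?_ ?_
  · intro i hi
    rw [mem_F] at hi
    obtain ⟨hmono, hb⟩ := hi
    rw [Finset.mem_sigma, Finset.mem_Ioo, mem_F]
    refine ⟨⟨(hb _).1, (hb _).2⟩, ?_, ?_⟩
    · exact fun a b hab => hmono (by simpa using hab)
    · intro j
      exact ⟨(hb _).1, hmono (Fin.castSucc_lt_last j)⟩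
  · rintro ⟨m, i'⟩ hx
    rw [Finset.mem_sigma, Finset.mem_Ioo, mem_F] at hx
    obtain ⟨⟨hm0, hmn⟩, hmono, hb⟩ := hx
    rw [mem_F]
    constructor
    · rw [Fin.strictMono_iff_lt_succ]
      intro j
      refine Fin.lastCases ?_ ?_ j
      · simp only [Fin.succ_last, Fin.snoc_castSucc, Fin.snoc_last]
        exact (hb _).2
      · intro j'
        rw [Fin.succ_castSucc]
        simp only [Fin.snoc_castSucc]
        exact hmono (Fin.castSucc_lt_succ (i := j'))
    · intro j
      refine Fin.lastCases ?_ ?_ j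
      · simp only [Fin.snoc_last]
        exact ⟨hm0, hmn⟩
      · intro j'
        simp only [Fin.snoc_castSucc]
        exact ⟨(hb _).1, lt_trans (hb _).2 hmn⟩
  · intro i _
    exact Fin.snoc_init_self i
  · rintro ⟨m, i'⟩ _
    simp only [Fin.snoc_last, Fin.init_snoc]
  · intro i hi
    rw [mem_F] at hi
    rw [term, term, gapProd_succ]

lemma S_zero (d n : ℕ) :
    S d 0 n = ∑ m ∈ Finset.Ioo 0 n,
      (m : ℝ) ^ (-(d : ℝ) / 2) * ((n - m : ℕ) : ℝ) ^ (-(d : ℝ) / 2) := by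
  rw [S]
  refine Finset.sum_nbij' (i := fun i => i 0) (j := fun m => fun _ => m) ?_ ?_ ?_ ?_ ?_
  · intro i hi
    rw [mem_F] at hi
    rw [Finset.mem_Ioo]
    exact hi.2 0
  · intro m hm
    rw [Finset.mem_Ioo] at hm
    rw [mem_F]
    refine ⟨fun a b hab => absurd (Fin.lt_iff_val_lt_val.mp hab) ?_, fun j => hm⟩
    have := a.isLt
    have := b.isLt
    omega
  · intro i _
    funext j
    have hj : j = 0 := Fin.ext (by have := j.isLt; omega)
    rw [hj]
  · intro m _
    rfl
  · intro i _
    rw [term, gapProd]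
    rw [Fin.prod_univ_one]
    norm_num

end Stmt14Aux

open Stmt14Aux in
/-- Lemma C.1: there is `c > 0` (depending only on `d`) such that for all `r ≥ 1` and
`n ≥ r + 1`,
`Σ_{0 < i_1 < ⋯ < i_r < n} i_1^{−d/2} (i_2−i_1)^{−d/2} ⋯ (n−i_r)^{−d/2} ≤ c^r n^{−d/2}`
(stated with `r + 1` in place of `r`). -/
theorem stmt14 (d : ℕ) (hd : 3 ≤ d) :
    ∃ c : ℝ, 0 < c ∧
      ∀ r n : ℕ, r + 2 ≤ n →
        (∑' i : {i : Fin (r + 1) → ℕ // StrictMono i ∧ ∀ j, 0 < i j ∧ i j < n},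
            gapProd d r i.1 * ((n - i.1 (Fin.last r) : ℕ) : ℝ) ^ (-(d : ℝ) / 2)) ≤
          c ^ (r + 1) * (n : ℝ) ^ (-(d : ℝ) / 2) := by
  set p : ℝ := (d : ℝ) / 2 with hp_def
  have hd3 : (3 : ℝ) ≤ (d : ℝ) := by exact_mod_cast hd
  have hp1 : 1 < p := by rw [hp_def]; linarith
  have hsum : Summable (fun k : ℕ => (k : ℝ) ^ (-p)) :=
    Real.summable_nat_rpow.mpr (by linarith)
  set Z : ℝ := ∑' k : ℕ, (k : ℝ) ^ (-p) with hZ_def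
  have hZ0 : 0 ≤ Z := tsum_nonneg fun k => Real.rpow_nonneg (Nat.cast_nonneg k) _
  set C : ℝ := 2 * (2 : ℝ) ^ p * Z with hC_def
  have hC0 : 0 ≤ C := by positivity
  -- the convolution estimate
  have conv : ∀ n : ℕ, ∑ m ∈ Finset.Ioo 0 n, (m : ℝ) ^ (-p) * ((n - m : ℕ) : ℝ) ^ (-p) ≤
      C * (n : ℝ) ^ (-p) := by
    intro n
    rcases Nat.eq_zero_or_pos n with hn | hn
    · subst hn; simp [hC_def]; positivity
    have hn0 : (0 : ℝ) < (n : ℝ) := by exact_mod_cast hn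
    rw [← Finset.sum_filter_add_sum_filter_not (Finset.Ioo 0 n) (fun m => 2 * m ≤ n)]
    have key : ∀ m ∈ Finset.Ioo 0 n, 2 * m ≤ n →
        ((n - m : ℕ) : ℝ) ^ (-p) ≤ (2 : ℝ) ^ p * (n : ℝ) ^ (-p) := by
      intro m hm h2m
      rw [Finset.mem_Ioo] at hm
      have hcast : ((n - m : ℕ) : ℝ) = (n : ℝ) - (m : ℝ) := by
        rw [Nat.cast_sub hm.2.le]
      have hhalf : (n : ℝ) / 2 ≤ (n : ℝ) - (m : ℝ) := by
        have : (2 : ℝ) * m ≤ n := by exact_mod_cast h2m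
        linarith
      have h1 : ((n - m : ℕ) : ℝ) ^ (-p) ≤ ((n : ℝ) / 2) ^ (-p) := by
        rw [hcast]
        exact Real.rpow_le_rpow_of_nonpos (by positivity) hhalf (by linarith)
      have h2 : ((n : ℝ) / 2) ^ (-p) = (2 : ℝ) ^ p * (n : ℝ) ^ (-p) := by
        rw [Real.div_rpow hn0.le (by norm_num), Real.rpow_neg hn0.le,
          Real.rpow_neg (by norm_num : (0:ℝ) ≤ 2)]
        field_simp
      rw [h2] at h1
      exact h1
    have keyA : ∑ m ∈ (Finset.Ioo 0 n).filter (fun m => 2 * m ≤ n),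
        (m : ℝ) ^ (-p) * ((n - m : ℕ) : ℝ) ^ (-p) ≤ (2 : ℝ) ^ p * Z * (n : ℝ) ^ (-p) := by
      calc ∑ m ∈ (Finset.Ioo 0 n).filter (fun m => 2 * m ≤ n),
            (m : ℝ) ^ (-p) * ((n - m : ℕ) : ℝ) ^ (-p)
          ≤ ∑ m ∈ (Finset.Ioo 0 n).filter (fun m => 2 * m ≤ n),
            (m : ℝ) ^ (-p) * ((2 : ℝ) ^ p * (n : ℝ) ^ (-p)) := by
            refine Finset.sum_le_sum fun m hm => ?_
            rw [Finset.mem_filter] at hm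
            exact mul_le_mul_of_nonneg_left (key m hm.1 hm.2)
              (Real.rpow_nonneg (Nat.cast_nonneg m) _)
        _ = (∑ m ∈ (Finset.Ioo 0 n).filter (fun m => 2 * m ≤ n), (m : ℝ) ^ (-p)) *
            ((2 : ℝ) ^ p * (n : ℝ) ^ (-p)) := by rw [Finset.sum_mul]
        _ ≤ Z * ((2 : ℝ) ^ p * (n : ℝ) ^ (-p)) := by
            refine mul_le_mul_of_nonneg_right ?_ (by positivity)
            exact hsum.sum_le_tsum _ (fun k _ => Real.rpow_nonneg (Nat.cast_nonneg k) _)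
        _ = (2 : ℝ) ^ p * Z * (n : ℝ) ^ (-p) := by ring
    have keyB : ∑ m ∈ (Finset.Ioo 0 n).filter (fun m => ¬ 2 * m ≤ n),
        (m : ℝ) ^ (-p) * ((n - m : ℕ) : ℝ) ^ (-p) ≤ (2 : ℝ) ^ p * Z * (n : ℝ) ^ (-p) := by
      have key' : ∀ m ∈ (Finset.Ioo 0 n).filter (fun m => ¬ 2 * m ≤ n),
          (m : ℝ) ^ (-p) ≤ (2 : ℝ) ^ p * (n : ℝ) ^ (-p) := by
        intro m hm
        rw [Finset.mem_filter, Finset.mem_Ioo] at hm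
        have hhalf : (n : ℝ) / 2 ≤ (m : ℝ) := by
          have : (n : ℝ) < 2 * m := by exact_mod_cast Nat.lt_of_not_le hm.2
          linarith
        have h1 : (m : ℝ) ^ (-p) ≤ ((n : ℝ) / 2) ^ (-p) :=
          Real.rpow_le_rpow_of_nonpos (by positivity) hhalf (by linarith)
        have h2 : ((n : ℝ) / 2) ^ (-p) = (2 : ℝ) ^ p * (n : ℝ) ^ (-p) := by
          rw [Real.div_rpow hn0.le (by norm_num), Real.rpow_neg hn0.le,
            Real.rpow_neg (by norm_num : (0:ℝ) ≤ 2)]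
          field_simp
        rw [h2] at h1
        exact h1
      calc ∑ m ∈ (Finset.Ioo 0 n).filter (fun m => ¬ 2 * m ≤ n),
            (m : ℝ) ^ (-p) * ((n - m : ℕ) : ℝ) ^ (-p)
          ≤ ∑ m ∈ (Finset.Ioo 0 n).filter (fun m => ¬ 2 * m ≤ n),
            ((2 : ℝ) ^ p * (n : ℝ) ^ (-p)) * ((n - m : ℕ) : ℝ) ^ (-p) := by
            refine Finset.sum_le_sum fun m hm => ?_
            exact mul_le_mul_of_nonneg_right (key' m hm)
              (Real.rpow_nonneg (Nat.cast_nonneg _) _)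
        _ = ((2 : ℝ) ^ p * (n : ℝ) ^ (-p)) *
            ∑ m ∈ (Finset.Ioo 0 n).filter (fun m => ¬ 2 * m ≤ n), ((n - m : ℕ) : ℝ) ^ (-p) := by
            rw [Finset.mul_sum]
        _ ≤ ((2 : ℝ) ^ p * (n : ℝ) ^ (-p)) * Z := by
            refine mul_le_mul_of_nonneg_left ?_ (by positivity)
            have himg : ∑ m ∈ (Finset.Ioo 0 n).filter (fun m => ¬ 2 * m ≤ n),
                ((n - m : ℕ) : ℝ) ^ (-p) =
                ∑ k ∈ ((Finset.Ioo 0 n).filter (fun m => ¬ 2 * m ≤ n)).image (fun m => n - m),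
                  (k : ℝ) ^ (-p) := by
              rw [Finset.sum_image]
              intro x hx y hy hxy
              rw [Finset.mem_coe, Finset.mem_filter, Finset.mem_Ioo] at hx hy
              simp only at hxy
              omega
            rw [himg]
            exact hsum.sum_le_tsum _ (fun k _ => Real.rpow_nonneg (Nat.cast_nonneg k) _)
        _ = (2 : ℝ) ^ p * Z * (n : ℝ) ^ (-p) := by ring
    calc _ ≤ (2 : ℝ) ^ p * Z * (n : ℝ) ^ (-p) + (2 : ℝ) ^ p * Z * (n : ℝ) ^ (-p) :=
          add_le_add keyA keyB
      _ = C * (n : ℝ) ^ (-p) := by rw [hC_def]; ring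
  set c : ℝ := max C 1 with hc_def
  have hc1 : (1 : ℝ) ≤ c := le_max_right _ _
  have hc0 : (0 : ℝ) < c := lt_of_lt_of_le one_pos hc1
  have hCc : C ≤ c := le_max_left _ _
  have main : ∀ r n : ℕ, S d r n ≤ c ^ (r + 1) * (n : ℝ) ^ (-p) := by
    intro r
    induction r with
    | zero =>
        intro n
        rw [S_zero]
        have h1 : ∑ m ∈ Finset.Ioo 0 n, (m : ℝ) ^ (-(d:ℝ)/2) * ((n - m : ℕ) : ℝ) ^ (-(d:ℝ)/2) ≤
            C * (n : ℝ) ^ (-p) := by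
          have := conv n
          simpa [hp_def, neg_div] using this
        refine h1.trans ?_
        rw [pow_one]
        exact mul_le_mul_of_nonneg_right hCc (Real.rpow_nonneg (Nat.cast_nonneg n) _)
    | succ r ih =>
        intro n
        rw [S_succ]
        have step1 : ∑ m ∈ Finset.Ioo 0 n, S d r m * ((n - m : ℕ) : ℝ) ^ (-(d:ℝ)/2) ≤
            ∑ m ∈ Finset.Ioo 0 n, c ^ (r + 1) * ((m : ℝ) ^ (-p) * ((n - m : ℕ) : ℝ) ^ (-p)) := by
          refine Finset.sum_le_sum fun m _ => ?_
          have h2 : ((n - m : ℕ) : ℝ) ^ (-(d:ℝ)/2) = ((n - m : ℕ) : ℝ) ^ (-p) := by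
            rw [hp_def]; ring_nf
          rw [h2, ← mul_assoc]
          exact mul_le_mul_of_nonneg_right (ih m) (Real.rpow_nonneg (Nat.cast_nonneg _) _)
        refine step1.trans ?_
        rw [← Finset.mul_sum]
        calc c ^ (r + 1) * ∑ m ∈ Finset.Ioo 0 n, (m : ℝ) ^ (-p) * ((n - m : ℕ) : ℝ) ^ (-p)
            ≤ c ^ (r + 1) * (C * (n : ℝ) ^ (-p)) :=
              mul_le_mul_of_nonneg_left (conv n) (by positivity)
          _ ≤ c ^ (r + 1) * (c * (n : ℝ) ^ (-p)) := by
              refine mul_le_mul_of_nonneg_left ?_ (by positivity)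
              exact mul_le_mul_of_nonneg_right hCc (Real.rpow_nonneg (Nat.cast_nonneg n) _)
          _ = c ^ (r + 1 + 1) * (n : ℝ) ^ (-p) := by ring
  refine ⟨c, hc0, fun r n _ => ?_⟩
  rw [tsum_eq_S]
  have := main r n
  have hpe : -(d : ℝ) / 2 = -p := by rw [hp_def]; ring
  rw [hpe]
  exact this
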